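/- arXiv:1310.8245 — 3 statements merged into one kernel-verified Lean document; each statement's English description precedes it below -/
import Mathlib

section
/- Let s be a Nash equilibrium of the network creation game with n players and edge price α > 0 whose graph G_s contains a cycle, and let c be the length of a shortest cycle of G_s. Then α ≤ (c−2)(n−1). -/
open SimpleGraph ENNReal

/-- The undirected graph built by a strategy profile: `i` and `j` are adjacent
iff one of them bought an edge to the other. -/
def stratGraph {n : ℕ} (s : Fin n → Finset (Fin n)) : SimpleGraph (Fin n) where
  Adj i j := i ≠ j ∧ (j ∈ s i ∨ i ∈ s j)
  symm := ⟨fun i j h => ⟨h.1.symm, h.2.symm⟩⟩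
  loopless := ⟨fun i h => h.1 rfl⟩

/-- The cost of player `i`: `α` per bought edge plus the sum of (extended)
distances to all players (`⊤` encodes disconnection). -/
noncomputable def playerCost {n : ℕ} (α : ℝ) (s : Fin n → Finset (Fin n)) (i : Fin n) : ℝ≥0∞ :=
  ENNReal.ofReal α * (s i).card + ∑ j, (stratGraph s).edist i j

/-- A strategy profile (where no player buys an edge to itself) is a Nash
equilibrium if no player can strictly decrease its cost by changing its own
strategy. -/
def IsNashEq {n : ℕ} (α : ℝ) (s : Fin n → Finset (Fin n)) : Prop :=
  (∀ i, i ∉ s i) ∧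
  ∀ (i : Fin n) (t : Finset (Fin n)), i ∉ t →
    playerCost α s i ≤ playerCost α (Function.update s i t) i


variable {V : Type*} [DecidableEq V]

/-- Replacing each use of the edge `s(x,y)` in a walk by a detour walk `q`. -/
lemma detour_aux {G : SimpleGraph V} {x y : V}
    (q : (G.deleteEdges {s(x,y)}).Walk x y) (hq : 1 ≤ q.length)
    {u v : V} (p : G.Walk u v) :
    ∃ r : (G.deleteEdges {s(x,y)}).Walk u v,
      r.length ≤ p.length + (q.length - 1) * p.edges.count s(x,y) := by
  induction p with
  | nil => exact ⟨.nil, by simp⟩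
  | @cons u w v h p ih =>
    obtain ⟨r, hr⟩ := ih
    by_cases he : s(u,w) = s(x,y)
    · have hc : (Walk.cons h p).edges.count s(x,y) = p.edges.count s(x,y) + 1 := by
        simp [Walk.edges_cons, List.count_cons, he]
      obtain ⟨k, hk⟩ : ∃ k, q.length = k + 1 := ⟨q.length - 1, by omega⟩
      rw [Sym2.eq_iff] at he
      rcases he with ⟨rfl, rfl⟩ | ⟨rfl, rfl⟩
      · refine ⟨q.append r, ?_⟩
        rw [Walk.length_append, Walk.length_cons, hc, hk, Nat.mul_add]
        simp only [Nat.add_sub_cancel, Nat.mul_one]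
        rw [hk, Nat.add_sub_cancel] at hr
        omega
      · refine ⟨q.reverse.append r, ?_⟩
        rw [Walk.length_append, Walk.length_cons, Walk.length_reverse, hc, hk, Nat.mul_add]
        simp only [Nat.add_sub_cancel, Nat.mul_one]
        rw [hk, Nat.add_sub_cancel] at hr
        omega
    · have hadj : (G.deleteEdges {s(x,y)}).Adj u w := by
        rw [deleteEdges_adj]
        exact ⟨h, by simpa using he⟩
      refine ⟨Walk.cons hadj r, ?_⟩
      have hc : (Walk.cons h p).edges.count s(x,y) = p.edges.count s(x,y) := by
        simp [Walk.edges_cons, List.count_cons, he]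
      rw [Walk.length_cons, Walk.length_cons, hc]
      omega

lemma edist_deleteEdges_le {G : SimpleGraph V} {x y : V}
    (q : (G.deleteEdges {s(x,y)}).Walk x y) (hq : 1 ≤ q.length) (u v : V) :
    (G.deleteEdges {s(x,y)}).edist u v ≤ G.edist u v + ((q.length - 1 : ℕ) : ℕ∞) := by
  rcases eq_or_ne (G.edist u v) ⊤ with h | h
  · simp [h]
  · obtain ⟨w0, hw0⟩ := exists_walk_of_edist_ne_top h
    set p := w0.bypass with hp
    have hpath : p.IsPath := w0.bypass_isPath
    have hcount : p.edges.count s(x,y) ≤ 1 :=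
      List.nodup_iff_count_le_one.mp hpath.isTrail.edges_nodup _
    obtain ⟨r, hr⟩ := detour_aux q hq p
    have hlen : r.length ≤ w0.length + (q.length - 1) := by
      have h1 : (q.length - 1) * p.edges.count s(x,y) ≤ q.length - 1 :=
        le_of_le_of_eq (Nat.mul_le_mul_left _ hcount) (Nat.mul_one _)
      have h2 : p.length ≤ w0.length := w0.length_bypass_le
      omega
    calc (G.deleteEdges {s(x,y)}).edist u v ≤ (r.length : ℕ∞) := edist_le r
      _ ≤ ((w0.length + (q.length - 1) : ℕ) : ℕ∞) := by exact_mod_cast hlen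
      _ = G.edist u v + ((q.length - 1 : ℕ) : ℕ∞) := by
          rw [Nat.cast_add, hw0]

lemma toENNReal_sum {ι : Type*} (t : Finset ι) (f : ι → ℕ∞) :
    ((∑ x ∈ t, f x : ℕ∞) : ℝ≥0∞) = ∑ x ∈ t, (f x : ℝ≥0∞) :=
  map_sum (⟨⟨ENat.toENNReal, ENat.toENNReal_zero⟩, ENat.toENNReal_add⟩ : ℕ∞ →+ ℝ≥0∞) f t

/-- The unilateral-deviation graph after player `i` drops its edge to `j`
contains the original graph minus the edge `{i,j}`. -/
lemma deleteEdges_le_update {n : ℕ} (s : Fin n → Finset (Fin n)) (i j : Fin n) :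
    (stratGraph s).deleteEdges {s(i,j)} ≤ stratGraph (Function.update s i ((s i).erase j)) := by
  intro u v huv
  rw [deleteEdges_adj] at huv
  obtain ⟨⟨hne, hor⟩, hnot⟩ := huv
  have hne2 : s(u,v) ≠ s(i,j) := by simpa using hnot
  refine ⟨hne, ?_⟩
  rcases hor with hmem | hmem
  · left
    rcases eq_or_ne u i with rfl | hu
    · rw [Function.update_self]
      exact Finset.mem_erase.mpr ⟨fun h => hne2 (by rw [h]), hmem⟩
    · rwa [Function.update_of_ne hu]
  · right
    rcases eq_or_ne v i with rfl | hv
    · rw [Function.update_self]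
      refine Finset.mem_erase.mpr ⟨fun h => hne2 ?_, hmem⟩
      rw [h]; exact Sym2.eq_swap
    · rwa [Function.update_of_ne hv]

/-- At a Nash equilibrium every player's total distance is finite. -/
lemma nash_sum_edist_ne_top {n : ℕ} (α : ℝ) (s : Fin n → Finset (Fin n))
    (hs : IsNashEq α s) (i : Fin n) :
    (∑ v, ((stratGraph s).edist i v : ℝ≥0∞)) ≠ ⊤ := by
  have h0 := hs.2 i (Finset.univ.erase i) (Finset.notMem_erase i _)
  set s0 := Function.update s i (Finset.univ.erase i) with hs0
  have hub : ∀ v : Fin n, ((stratGraph s0).edist i v : ℝ≥0∞) ≤ 1 := by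
    intro v
    rcases eq_or_ne v i with rfl | hv
    · simp [SimpleGraph.edist_self]
    · have hadj : (stratGraph s0).Adj i v := by
        refine ⟨hv.symm, Or.inl ?_⟩
        rw [hs0, Function.update_self]
        exact Finset.mem_erase.mpr ⟨hv, Finset.mem_univ v⟩
      rw [edist_eq_one_iff_adj.mpr hadj]
      simp
  have hsum : (∑ v, ((stratGraph s0).edist i v : ℝ≥0∞)) ≤ (n : ℝ≥0∞) := by
    calc (∑ v, ((stratGraph s0).edist i v : ℝ≥0∞)) ≤ ∑ _v : Fin n, 1 :=
          Finset.sum_le_sum fun v _ => hub v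
      _ = (n : ℝ≥0∞) := by simp
  have hne : playerCost α s0 i ≠ ⊤ := by
    unfold playerCost
    rw [toENNReal_sum]
    exact ENNReal.add_ne_top.mpr
      ⟨ENNReal.mul_ne_top ENNReal.ofReal_ne_top (ENNReal.natCast_ne_top _),
       ne_top_of_le_ne_top (ENNReal.natCast_ne_top n) hsum⟩
  have hfin : playerCost α s i ≠ ⊤ := ne_top_of_le_ne_top hne h0
  intro htop
  apply hfin
  unfold playerCost
  rw [toENNReal_sum, htop, add_top]

/-- Key deviation argument: if player `i` bought the edge to `j` and there is a
detour walk from `i` to `j` avoiding that edge, then `α` is bounded. -/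
lemma nash_alpha_le {n : ℕ} (α : ℝ) (s : Fin n → Finset (Fin n))
    (hs : IsNashEq α s) {i j : Fin n} (hj : j ∈ s i)
    (q : ((stratGraph s).deleteEdges {s(i,j)}).Walk i j) (hq : 1 ≤ q.length) :
    ENNReal.ofReal α ≤ ((q.length - 1 : ℕ) : ℝ≥0∞) * ((n - 1 : ℕ) : ℝ≥0∞) := by
  set D : ℝ≥0∞ := ((q.length - 1 : ℕ) : ℝ≥0∞) with hD
  set S : ℝ≥0∞ := ∑ v, ((stratGraph s).edist i v : ℝ≥0∞) with hS
  have hii : i ∉ s i := hs.1 i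
  have hSfin : S ≠ ⊤ := nash_sum_edist_ne_top α s hs i
  have hit : i ∉ (s i).erase j := fun h => hii (Finset.mem_of_mem_erase h)
  have h1 := hs.2 i ((s i).erase j) hit
  set s1 := Function.update s i ((s i).erase j) with hs1
  have hle : (stratGraph s).deleteEdges {s(i,j)} ≤ stratGraph s1 := deleteEdges_le_update s i j
  -- pointwise distance bound
  have hstep : ∀ v, ((stratGraph s1).edist i v : ℝ≥0∞)
      ≤ ((stratGraph s).edist i v : ℝ≥0∞) + (if v = i then 0 else D) := by
    intro v
    rcases eq_or_ne v i with rfl | hv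
    · simp [edist_self]
    · rw [if_neg hv]
      have h2 : (stratGraph s1).edist i v ≤ ((stratGraph s).deleteEdges {s(i,j)}).edist i v :=
        edist_anti hle
      have h4 : (stratGraph s1).edist i v
          ≤ (stratGraph s).edist i v + ((q.length - 1 : ℕ) : ℕ∞) :=
        h2.trans (edist_deleteEdges_le q hq i v)
      calc ((stratGraph s1).edist i v : ℝ≥0∞)
          ≤ (((stratGraph s).edist i v + ((q.length - 1 : ℕ) : ℕ∞) : ℕ∞) : ℝ≥0∞) :=
            ENat.toENNReal_mono h4
        _ = ((stratGraph s).edist i v : ℝ≥0∞) + D := by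
            rw [ENat.toENNReal_add]
            simp [hD]
  have hsumite : (∑ v : Fin n, (if v = i then (0:ℝ≥0∞) else D)) = ((n - 1 : ℕ) : ℝ≥0∞) * D := by
    rw [← Finset.sum_erase_add _ _ (Finset.mem_univ i), if_pos rfl, add_zero]
    rw [Finset.sum_congr rfl (fun v hv => if_neg (Finset.ne_of_mem_erase hv))]
    rw [Finset.sum_const, Finset.card_erase_of_mem (Finset.mem_univ i)]
    simp [nsmul_eq_mul]
  have hsum1 : (∑ v, ((stratGraph s1).edist i v : ℝ≥0∞)) ≤ S + ((n - 1 : ℕ) : ℝ≥0∞) * D := by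
    calc (∑ v, ((stratGraph s1).edist i v : ℝ≥0∞))
        ≤ ∑ v, (((stratGraph s).edist i v : ℝ≥0∞) + (if v = i then 0 else D)) :=
          Finset.sum_le_sum fun v _ => hstep v
      _ = S + ((n - 1 : ℕ) : ℝ≥0∞) * D := by rw [Finset.sum_add_distrib, hsumite, hS]
  have hcardn : (s i).card = ((s i).erase j).card + 1 := by
    have h5 : 1 ≤ (s i).card := Finset.card_pos.mpr ⟨j, hj⟩
    rw [Finset.card_erase_of_mem hj]
    omega
  set X : ℝ≥0∞ := ENNReal.ofReal α * (((s i).erase j).card : ℝ≥0∞) + S with hX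
  have hXfin : X ≠ ⊤ := by
    simp [hX, ENNReal.add_ne_top, ENNReal.mul_ne_top, ENNReal.ofReal_ne_top,
      ENNReal.natCast_ne_top, hSfin]
  have hmain : ENNReal.ofReal α + X ≤ ((n - 1 : ℕ) : ℝ≥0∞) * D + X := by
    have hL : playerCost α s i = ENNReal.ofReal α + X := by
      unfold playerCost
      rw [toENNReal_sum, ← hS, hX, hcardn]
      push_cast
      ring
    have hR : playerCost α s1 i ≤ ((n - 1 : ℕ) : ℝ≥0∞) * D + X := by
      unfold playerCost
      rw [toENNReal_sum, hs1, Function.update_self, ← hs1, hX]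
      calc ENNReal.ofReal α * (((s i).erase j).card : ℝ≥0∞)
            + ∑ v, ((stratGraph s1).edist i v : ℝ≥0∞)
          ≤ ENNReal.ofReal α * (((s i).erase j).card : ℝ≥0∞)
            + (S + ((n - 1 : ℕ) : ℝ≥0∞) * D) := add_le_add le_rfl hsum1
        _ = ((n - 1 : ℕ) : ℝ≥0∞) * D
            + (ENNReal.ofReal α * (((s i).erase j).card : ℝ≥0∞) + S) := by ring
    exact hL ▸ (h1.trans hR)
  have hfinal := (ENNReal.add_le_add_iff_right hXfin).mp hmain
  rwa [mul_comm] at hfinal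

/-- If a Nash equilibrium graph contains a cycle and `c` is the length of a
shortest cycle, then `α ≤ (c − 2)(n − 1)`. -/
theorem alpha_le_girth_sub_two_mul {n : ℕ} (hn : 2 ≤ n) (α : ℝ) (hα : 0 < α)
    (s : Fin n → Finset (Fin n)) (hs : IsNashEq α s)
    (hcyc : ¬ (stratGraph s).IsAcyclic) :
    α ≤ (((stratGraph s).girth : ℝ) - 2) * ((n : ℝ) - 1) := by
  obtain ⟨a, w, hw, hlen⟩ := SimpleGraph.exists_girth_eq_length.mpr hcyc
  have hg3 : 3 ≤ (stratGraph s).girth := SimpleGraph.three_le_girth hcyc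
  set c := (stratGraph s).girth with hc
  cases w with
  | nil => exact absurd hw (by simp [Walk.isCycle_def])
  | @cons _ b _ h p =>
    rw [Walk.length_cons] at hlen
    have hedges : s(a,b) ∉ p.edges := by
      have hnd := hw.isTrail.edges_nodup
      rw [Walk.edges_cons] at hnd
      exact (List.nodup_cons.mp hnd).1
    have hplen : p.length = c - 1 := by omega
    -- conclusion from the key lemma, in ℝ≥0∞
    have key : ENNReal.ofReal α ≤ ((c - 2 : ℕ) : ℝ≥0∞) * ((n - 1 : ℕ) : ℝ≥0∞) := by
      rcases h.2 with hb | ha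
      · have hp' : ∀ e ∈ p.edges, e ∉ ({s(a,b)} : Set (Sym2 (Fin n))) := by
          intro e he
          simp only [Set.mem_singleton_iff]
          rintro rfl; exact hedges he
        have hqlen : ((p.toDeleteEdges _ hp').reverse).length = c - 1 := by
          rw [Walk.length_reverse, Walk.toDeleteEdges, Walk.length_transfer, hplen]
        have hkey := nash_alpha_le α s hs hb ((p.toDeleteEdges _ hp').reverse) (by omega)
        rwa [hqlen, show c - 1 - 1 = c - 2 by omega] at hkey
      · have hp' : ∀ e ∈ p.edges, e ∉ ({s(b,a)} : Set (Sym2 (Fin n))) := by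
          intro e he
          simp only [Set.mem_singleton_iff]
          rintro rfl
          exact hedges (by rwa [Sym2.eq_swap] at he)
        have hqlen : (p.toDeleteEdges _ hp').length = c - 1 := by
          rw [Walk.toDeleteEdges, Walk.length_transfer, hplen]
        have hkey := nash_alpha_le α s hs ha (p.toDeleteEdges _ hp') (by omega)
        rwa [hqlen, show c - 1 - 1 = c - 2 by omega] at hkey
    have hcast : (((c - 2 : ℕ) : ℝ≥0∞) * ((n - 1 : ℕ) : ℝ≥0∞))
        = ENNReal.ofReal (((c : ℝ) - 2) * ((n : ℝ) - 1)) := by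
      rw [← Nat.cast_mul, ← ENNReal.ofReal_natCast]
      congr 1
      push_cast [Nat.cast_sub (by omega : 2 ≤ c), Nat.cast_sub (by omega : 1 ≤ n)]
      ring
    rw [hcast] at key
    have hnn : 0 ≤ ((c : ℝ) - 2) * ((n : ℝ) - 1) := by
      have h3 : (3:ℝ) ≤ c := by exact_mod_cast hg3
      have h2 : (2:ℝ) ≤ n := by exact_mod_cast hn
      nlinarith
    exact (ENNReal.ofReal_le_ofReal_iff hnn).mp key
end

section
/- Let s be a Nash equilibrium of the network creation game with n players and edge price α > 0, let G = G_s, and let H be a non-trivial biconnected component of G. If for some integer t ≥ 1 the t-neighborhood N_t(u) of every vertex u of H contains a vertex of degree at least 3 in H, then the average degree of H is at least 2 + 1/(3t+1). -/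
open SimpleGraph ENNReal

/-- `B` spans a non-trivial biconnected component of `G`: a maximal (vertex) set
of size at least three whose induced subgraph is connected and contains no bridge. -/
def IsNontrivialBicomp {n : ℕ} (G : SimpleGraph (Fin n)) (B : Set (Fin n)) : Prop :=
  3 ≤ B.ncard ∧ (G.induce B).Connected ∧ (∀ e, ¬ (G.induce B).IsBridge e) ∧
  ∀ B' : Set (Fin n), B ⊆ B' →
    (3 ≤ B'.ncard ∧ (G.induce B').Connected ∧ (∀ e, ¬ (G.induce B').IsBridge e)) → B' = B

/-- The degree of `u` inside the subgraph of `G` induced by the vertex set `B`. -/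
noncomputable def degH {n : ℕ} (G : SimpleGraph (Fin n)) (B : Set (Fin n)) (u : Fin n) : ℕ :=
  {w | w ∈ B ∧ G.Adj u w}.ncard
/-- The average degree of the subgraph of `G` induced by `B`
(= `2|E(H)|/|V(H)|`, since the degrees of `H` sum to twice its edge count). -/
noncomputable def avgDegH {n : ℕ} (G : SimpleGraph (Fin n)) (B : Set (Fin n)) : ℝ :=
  (∑ u ∈ B.toFinite.toFinset, (degH G B u : ℝ)) / B.ncard








variable {V : Type*}

/-- Distance from the start of a walk to its `i`-th vertex is at most `i`. -/
lemma walk_dist_getVert_le {H : SimpleGraph V} (hconn : H.Connected)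
    {u v : V} (p : H.Walk u v) (i : ℕ) : H.dist u (p.getVert i) ≤ i := by
  induction i with
  | zero => simp [SimpleGraph.Walk.getVert_zero]
  | succ i ih =>
    by_cases hi : i < p.length
    · have hadj := p.adj_getVert_succ hi
      have h1 : H.dist (p.getVert i) (p.getVert (i + 1)) ≤ 1 :=
        SimpleGraph.dist_le hadj.toWalk
      have := hconn.dist_triangle (u := u) (v := p.getVert i) (w := p.getVert (i + 1))
      omega
    · rw [p.getVert_of_length_le (by omega)]
      have h2 : H.dist u v ≤ p.length := SimpleGraph.dist_le p
      omega

/-- On a shortest walk, `getVert i` is at distance exactly `i` from the start. -/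
lemma shortest_getVert_dist {H : SimpleGraph V} (hconn : H.Connected)
    {u v : V} (p : H.Walk u v) (hp : p.length = H.dist u v) {i : ℕ} (hi : i ≤ p.length) :
    H.dist u (p.getVert i) = i := by
  have h1 : H.dist u (p.getVert i) ≤ i := walk_dist_getVert_le hconn p i
  have h2 : H.dist v (p.getVert i) ≤ p.length - i := by
    have := walk_dist_getVert_le hconn p.reverse (p.length - i)
    rwa [p.getVert_reverse, Nat.sub_sub_self hi] at this
  have h3 := hconn.dist_triangle (u := u) (v := p.getVert i) (w := v)
  rw [SimpleGraph.dist_comm] at h2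
  rw [← hp] at h3
  omega

/-- A degree-2 vertex has a unique neighbour besides a given one. -/
lemma deg2_unique [Fintype V] [DecidableEq V] {H : SimpleGraph V} [DecidableRel H.Adj]
    {x a b c : V} (hx : H.degree x = 2) (hb : H.Adj x b) (hc : H.Adj x c) (ha' : H.Adj x a)
    (hba : b ≠ a) (hca : c ≠ a) : b = c := by
  by_contra hbc
  have hsub : ({a, b, c} : Finset V) ⊆ H.neighborFinset x := by
    intro y hy
    simp only [Finset.mem_insert, Finset.mem_singleton] at hy
    rcases hy with rfl | rfl | rfl <;> simpa [SimpleGraph.mem_neighborFinset]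
  have hcard : ({a, b, c} : Finset V).card = 3 := by
    rw [Finset.card_insert_of_notMem (by simp [hba.symm, hca.symm]),
      Finset.card_insert_of_notMem (by simpa using hbc), Finset.card_singleton]
  have := Finset.card_le_card hsub
  rw [hcard, SimpleGraph.card_neighborFinset_eq_degree, hx] at this
  omega

/-- In a connected bridgeless graph on at least 3 vertices, every degree is ≥ 2. -/
lemma min_degree_two [Fintype V] [DecidableEq V] (H : SimpleGraph V) [DecidableRel H.Adj]
    (hconn : H.Connected) (hcard : 3 ≤ Fintype.card V) (hbr : ∀ e, ¬ H.IsBridge e)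
    (u : V) : 2 ≤ H.degree u := by
  -- degree at least 1
  obtain ⟨v, hv⟩ := Fintype.exists_ne_of_one_lt_card (by omega) u
  obtain ⟨p⟩ := hconn.preconnected u v
  have hlen : 0 < p.length := by
    rcases Nat.eq_zero_or_pos p.length with h | h
    · exact absurd (SimpleGraph.Walk.eq_of_length_eq_zero h).symm hv
    · exact h
  have hadj1 : H.Adj u (p.getVert 1) := by
    have := p.adj_getVert_succ (i := 0) hlen
    rwa [SimpleGraph.Walk.getVert_zero] at this
  have hd1 : 1 ≤ H.degree u := by
    rw [← SimpleGraph.card_neighborFinset_eq_degree]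
    exact Finset.card_pos.mpr ⟨p.getVert 1, by simpa [SimpleGraph.mem_neighborFinset] using hadj1⟩
  -- degree not exactly 1
  rcases Nat.lt_or_ge (H.degree u) 2 with h2 | h2
  · exfalso
    have hdeg1 : H.degree u = 1 := by omega
    rw [← SimpleGraph.card_neighborFinset_eq_degree, Finset.card_eq_one] at hdeg1
    obtain ⟨w, hw⟩ := hdeg1
    have hadjw : H.Adj u w := by
      rw [← SimpleGraph.mem_neighborFinset, hw]; simp
    apply hbr s(u, w)
    rw [SimpleGraph.isBridge_iff]
    rintro ⟨q⟩
    have hq : 0 < q.length := by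
      rcases Nat.eq_zero_or_pos q.length with h | h
      · exact absurd (SimpleGraph.Walk.eq_of_length_eq_zero h) hadjw.ne
      · exact h
    have hadjq : (H \ fromEdgeSet {s(u, w)}).Adj u (q.getVert 1) := by
      have := q.adj_getVert_succ (i := 0) hq
      rwa [SimpleGraph.Walk.getVert_zero] at this
    rw [SimpleGraph.sdiff_adj] at hadjq
    obtain ⟨hadjH, hnot⟩ := hadjq
    have : q.getVert 1 = w := by
      have : q.getVert 1 ∈ H.neighborFinset u := by
        simpa [SimpleGraph.mem_neighborFinset] using hadjH
      rwa [hw, Finset.mem_singleton] at this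
    rw [this] at hnot
    exact hnot (by simp [SimpleGraph.fromEdgeSet_adj, hadjw.ne])
  · exact h2

lemma avg_deg_abstract [Fintype V] [DecidableEq V] (H : SimpleGraph V) [DecidableRel H.Adj]
    (hconn : H.Connected) (hcard : 3 ≤ Fintype.card V) (hbr : ∀ e, ¬ H.IsBridge e)
    (t : ℕ) (ht : 1 ≤ t) (hnb : ∀ u, ∃ v, H.dist u v ≤ t ∧ 3 ≤ H.degree v) :
    2 + 1 / (3 * (t : ℝ) + 1) ≤ (∑ u, (H.degree u : ℝ)) / (Fintype.card V : ℝ) := by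
  classical
  have hdeg2 : ∀ u, 2 ≤ H.degree u := min_degree_two H hconn hcard hbr
  set V3 : Finset V := Finset.univ.filter (fun v => 3 ≤ H.degree v) with hV3def
  set V2 : Finset V := Finset.univ.filter (fun v => H.degree v = 2) with hV2def
  have hne : Nonempty V := Fintype.card_pos_iff.mp (by omega)
  obtain ⟨u0⟩ := hne
  have hV3ne : V3.Nonempty := by
    obtain ⟨v, _, hv3⟩ := hnb u0
    exact ⟨v, by simp [hV3def, hv3]⟩
  -- distance to the nearest vertex of degree ≥ 3
  set k : V → ℕ := fun u => (V3.image (H.dist u)).min' (hV3ne.image _) with hkdef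
  have hk_le : ∀ u v, v ∈ V3 → k u ≤ H.dist u v := fun u v hv =>
    Finset.min'_le _ _ (Finset.mem_image_of_mem _ hv)
  have hk_mem : ∀ u, ∃ v ∈ V3, H.dist u v = k u := by
    intro u
    have := (V3.image (H.dist u)).min'_mem (hV3ne.image _)
    rw [Finset.mem_image] at this
    obtain ⟨v, hv, h⟩ := this
    exact ⟨v, hv, h⟩
  choose nv hnv3 hnvd using hk_mem
  choose p hp using fun u => hconn.exists_walk_length_eq_dist u (nv u)
  have hplen : ∀ u, (p u).length = k u := fun u => (hp u).trans (hnvd u)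
  have hkt : ∀ u, k u ≤ t := by
    intro u
    obtain ⟨v, hvt, hv3⟩ := hnb u
    exact le_trans (hk_le u v (by simp [hV3def, hv3])) hvt
  have hk1 : ∀ u, u ∈ V2 → 1 ≤ k u := by
    intro u hu
    by_contra h
    have hk0 : k u = 0 := by omega
    have heq : u = nv u := SimpleGraph.Walk.eq_of_length_eq_zero (by rw [hplen u, hk0])
    have hu2 : H.degree u = 2 := (Finset.mem_filter.mp hu).2
    have h3 : 3 ≤ H.degree (nv u) := (Finset.mem_filter.mp (hnv3 u)).2
    rw [← heq] at h3
    omega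
  have hgd : ∀ u (i : ℕ), i ≤ k u → H.dist u ((p u).getVert i) = i := by
    intro u i hi
    exact shortest_getVert_dist hconn (p u) (hp u) (by rw [hplen u]; exact hi)
  have hint : ∀ u, u ∈ V2 → ∀ i, i < k u → H.degree ((p u).getVert i) = 2 := by
    intro u hu i hik
    have hge := hdeg2 ((p u).getVert i)
    by_contra h
    have h3 : 3 ≤ H.degree ((p u).getVert i) := by omega
    have hmem : (p u).getVert i ∈ V3 := by simp [hV3def, h3]
    have h1 := hk_le u _ hmem
    have hdle := walk_dist_getVert_le hconn (p u) i
    omega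
  -- the assignment map and its injectivity on V2
  have hinj : Set.InjOn (fun u => (⟨nv u, ((p u).getVert (k u - 1), k u)⟩ : Σ _ : V, V × ℕ))
      (V2 : Set V) := by
    intro u hu u' hu' heq
    simp only [Sigma.mk.inj_iff, Prod.mk.injEq, heq_eq_eq] at heq
    obtain ⟨hv, hw, hk⟩ := heq
    rw [Finset.mem_coe] at hu hu'
    set K := k u with hKdef
    have hK' : k u' = K := hk.symm
    have hlu : (p u).length = K := hplen u
    have hlu' : (p u').length = K := (hplen u').trans hK'
    have hK1 : 1 ≤ K := hk1 u hu
    have claim : ∀ j, j + 1 ≤ K →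
        (p u).getVert (K - j) = (p u').getVert (K - j) ∧
        (p u).getVert (K - j - 1) = (p u').getVert (K - j - 1) := by
      intro j
      induction j with
      | zero =>
        intro _
        constructor
        · have e1 : (p u).getVert K = nv u := by rw [← hlu]; exact (p u).getVert_length
          have e2 : (p u').getVert K = nv u' := by rw [← hlu']; exact (p u').getVert_length
          rw [Nat.sub_zero, e1, e2, hv]
        · rw [Nat.sub_zero]
          have h := hw
          rwa [hK'] at h
      | succ j ihj =>
        intro hj
        have hPj := ihj (by omega)
        have hstep1 : (p u).getVert (K - (j+1)) = (p u').getVert (K - (j+1)) := by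
          have harith : K - (j+1) = K - j - 1 := by omega
          rw [harith]; exact hPj.2
        refine ⟨hstep1, ?_⟩
        set i := K - j - 1 with hidef
        have hi1 : 1 ≤ i := by omega
        have hiK : i < K := by omega
        have him : K - (j+1) - 1 = i - 1 := by omega
        have hip : K - j = i + 1 := by omega
        rw [him]
        have hx : (p u).getVert i = (p u').getVert i := hPj.2
        have hxdeg : H.degree ((p u).getVert i) = 2 := hint u hu i hiK
        have hA1 : H.Adj ((p u).getVert (i-1)) ((p u).getVert i) := by
          have h := (p u).adj_getVert_succ (i := i - 1) (by omega)
          rwa [Nat.sub_add_cancel hi1] at h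
        have hA2 : H.Adj ((p u).getVert i) ((p u).getVert (i+1)) :=
          (p u).adj_getVert_succ (by omega)
        have hA1' : H.Adj ((p u').getVert (i-1)) ((p u').getVert i) := by
          have h := (p u').adj_getVert_succ (i := i - 1) (by omega)
          rwa [Nat.sub_add_cancel hi1] at h
        have hA2' : H.Adj ((p u').getVert i) ((p u').getVert (i+1)) :=
          (p u').adj_getVert_succ (by omega)
        have hsucc : (p u).getVert (i+1) = (p u').getVert (i+1) := by
          have h := hPj.1; rwa [hip] at h
        have hd1 : H.dist u ((p u).getVert (i-1)) = i - 1 := hgd u (i-1) (by omega)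
        have hd2 : H.dist u ((p u).getVert (i+1)) = i + 1 := hgd u (i+1) (by omega)
        have hd1' : H.dist u' ((p u').getVert (i-1)) = i - 1 := hgd u' (i-1) (by omega)
        have hd2' : H.dist u' ((p u').getVert (i+1)) = i + 1 := hgd u' (i+1) (by omega)
        have hba : (p u).getVert (i-1) ≠ (p u).getVert (i+1) := by
          intro hcon; rw [hcon, hd2] at hd1; omega
        have hca : (p u').getVert (i-1) ≠ (p u).getVert (i+1) := by
          rw [hsucc]
          intro hcon; rw [hcon, hd2'] at hd1'; omega
        exact deg2_unique hxdeg hA1.symm (by rw [hx]; exact hA1'.symm) hA2 hba hca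
    have hfin := (claim (K-1) (by omega)).2
    have hz : K - (K-1) - 1 = 0 := by omega
    rw [hz] at hfin
    simpa using hfin
  have hmaps : ∀ u ∈ V2, (⟨nv u, ((p u).getVert (k u - 1), k u)⟩ : Σ _ : V, V × ℕ) ∈
      V3.sigma (fun v => H.neighborFinset v ×ˢ Finset.Icc 1 t) := by
    intro u hu
    rw [Finset.mem_sigma]
    refine ⟨hnv3 u, ?_⟩
    rw [Finset.mem_product]
    constructor
    · rw [SimpleGraph.mem_neighborFinset]
      have h1 := hk1 u hu
      have hadj := (p u).adj_getVert_succ (i := k u - 1) (by rw [hplen u]; omega)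
      rw [Nat.sub_add_cancel h1] at hadj
      have hv : (p u).getVert (k u) = nv u := by rw [← hplen u]; exact (p u).getVert_length
      rw [hv] at hadj
      exact hadj.symm
    · rw [Finset.mem_Icc]; exact ⟨hk1 u hu, hkt u⟩
  have hcount : V2.card ≤ (∑ v ∈ V3, H.degree v) * t := by
    have h := Finset.card_le_card_of_injOn _ hmaps hinj
    rw [Finset.card_sigma] at h
    calc V2.card ≤ ∑ v ∈ V3, (H.neighborFinset v ×ˢ Finset.Icc 1 t).card := h
      _ = ∑ v ∈ V3, H.degree v * t := by
          refine Finset.sum_congr rfl fun v _ => ?_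
          rw [Finset.card_product, SimpleGraph.card_neighborFinset_eq_degree, Nat.card_Icc,
            Nat.add_sub_cancel]
      _ = (∑ v ∈ V3, H.degree v) * t := by rw [Finset.sum_mul]
  -- partition of the vertices
  have hd : Disjoint V2 V3 := by
    rw [Finset.disjoint_left]
    intro x hx hx'
    have h1 := (Finset.mem_filter.mp hx).2
    have h2 := (Finset.mem_filter.mp hx').2
    omega
  have hU : V2 ∪ V3 = Finset.univ := by
    apply Finset.eq_univ_iff_forall.mpr
    intro x
    have h := hdeg2 x
    rw [Finset.mem_union, Finset.mem_filter, Finset.mem_filter]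
    rcases Nat.lt_or_ge (H.degree x) 3 with h3 | h3
    · exact Or.inl ⟨Finset.mem_univ x, by omega⟩
    · exact Or.inr ⟨Finset.mem_univ x, h3⟩
  have hpart : V2.card + V3.card = Fintype.card V := by
    rw [← Finset.card_union_of_disjoint hd, hU, Finset.card_univ]
  have hsum : (∑ u, H.degree u) = 2 * V2.card + ∑ v ∈ V3, H.degree v := by
    rw [← hU, Finset.sum_union hd]
    congr 1
    rw [Finset.sum_congr rfl (fun x hx => (Finset.mem_filter.mp hx).2), Finset.sum_const,
      smul_eq_mul, mul_comm]
  have h3n3 : V3.card * 3 ≤ ∑ v ∈ V3, H.degree v := by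
    have := Finset.card_nsmul_le_sum V3 (fun v => H.degree v) 3
      (fun x hx => (Finset.mem_filter.mp hx).2)
    simpa using this
  have hn3 : 1 ≤ V3.card := hV3ne.card_pos
  -- pass to the reals
  have hNpos : (0:ℝ) < (Fintype.card V : ℝ) := by
    have : 0 < Fintype.card V := by omega
    exact_mod_cast this
  rw [le_div_iff₀ hNpos]
  have hcV : (Fintype.card V : ℝ) = (V2.card : ℝ) + (V3.card : ℝ) := by exact_mod_cast hpart.symm
  have hsumR : (∑ u, (H.degree u : ℝ)) = 2 * (V2.card : ℝ) + ((∑ v ∈ V3, H.degree v : ℕ) : ℝ) := by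
    rw [← Nat.cast_sum]
    exact_mod_cast congrArg (Nat.cast : ℕ → ℝ) hsum
  have hden : (0:ℝ) < 3 * (t:ℝ) + 1 := by positivity
  have hn2R : (V2.card : ℝ) ≤ ((∑ v ∈ V3, H.degree v : ℕ) : ℝ) * (t : ℝ) := by exact_mod_cast hcount
  have h3n3R : (V3.card : ℝ) * 3 ≤ ((∑ v ∈ V3, H.degree v : ℕ) : ℝ) := by exact_mod_cast h3n3
  have hn3R : (1:ℝ) ≤ (V3.card : ℝ) := by exact_mod_cast hn3
  have htR : (1:ℝ) ≤ (t:ℝ) := by exact_mod_cast ht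
  rw [hsumR, hcV]
  set n2 := (V2.card : ℝ)
  set n3 := (V3.card : ℝ)
  set S := ((∑ v ∈ V3, H.degree v : ℕ) : ℝ)
  have h2x : 2 + 1 / (3 * (t:ℝ) + 1) = (2 * (3 * (t:ℝ) + 1) + 1) / (3 * (t:ℝ) + 1) := by
    field_simp
  rw [h2x, div_mul_eq_mul_div, div_le_iff₀ hden]
  have hint2 : (2 * (t:ℝ) + 1) * (n3 * 3) ≤ (2 * (t:ℝ) + 1) * S :=
    mul_le_mul_of_nonneg_left h3n3R (by linarith)
  nlinarith [hn2R, hint2]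

/-- If the `t`-neighbourhood (inside `H`) of every vertex of a non-trivial
biconnected component `H` of a Nash equilibrium contains a vertex of degree at
least `3`, then the average degree of `H` is at least `2 + 1/(3t+1)`. -/
theorem avg_degree_ge {n : ℕ} (hn : 2 ≤ n) (α : ℝ) (hα : 0 < α)
    (s : Fin n → Finset (Fin n)) (hs : IsNashEq α s)
    (B : Set (Fin n)) (hB : IsNontrivialBicomp (stratGraph s) B)
    (t : ℕ) (ht : 1 ≤ t)
    (hnb : ∀ u : Fin n, ∀ hu : u ∈ B, ∃ v : Fin n, ∃ hv : v ∈ B,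
      ((stratGraph s).induce B).dist ⟨u, hu⟩ ⟨v, hv⟩ ≤ t ∧
      3 ≤ degH (stratGraph s) B v) :
    2 + 1 / (3 * (t : ℝ) + 1) ≤ avgDegH (stratGraph s) B := by
  classical
  obtain ⟨hcard3, hconn, hbr, -⟩ := hB
  set G := stratGraph s with hGdef
  haveI : Fintype ↥B := B.toFinite.fintype
  set H : SimpleGraph ↥B := G.induce B with hHdef
  haveI : DecidableRel H.Adj := Classical.decRel _
  have hcardV : Fintype.card ↥B = B.ncard := by
    rw [← Nat.card_eq_fintype_card, Nat.card_coe_set_eq]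
  have hdeg : ∀ u : ↥B, degH G B ↑u = H.degree u := by
    intro u
    have e1 : {w | w ∈ B ∧ G.Adj ↑u w} = Subtype.val '' {w : ↥B | H.Adj u w} := by
      ext w
      constructor
      · rintro ⟨hwB, hadj⟩
        exact ⟨⟨w, hwB⟩, hadj, rfl⟩
      · rintro ⟨⟨w', hw'⟩, hadj, rfl⟩
        exact ⟨hw', hadj⟩
    rw [degH, e1, Set.ncard_image_of_injective _ Subtype.val_injective,
      ← Nat.card_coe_set_eq, Nat.card_eq_fintype_card]
    exact SimpleGraph.card_neighborSet_eq_degree H u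
  have hcV3 : 3 ≤ Fintype.card ↥B := by rw [hcardV]; exact hcard3
  have hnb' : ∀ u : ↥B, ∃ v : ↥B, H.dist u v ≤ t ∧ 3 ≤ H.degree v := by
    intro u
    obtain ⟨v, hv, hdist, hdegv⟩ := hnb ↑u u.2
    refine ⟨⟨v, hv⟩, ?_, ?_⟩
    · simpa using hdist
    · rw [← hdeg ⟨v, hv⟩]; exact hdegv
  have key := avg_deg_abstract H hconn hcV3 hbr t ht hnb'
  rw [avgDegH]
  have hsum : (∑ u ∈ B.toFinite.toFinset, (degH G B u : ℝ)) = ∑ u : ↥B, (H.degree u : ℝ) := by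
    rw [Finset.sum_subtype B.toFinite.toFinset (fun x => B.toFinite.mem_toFinset)
      (fun u => (degH G B u : ℝ))]
    exact Finset.sum_congr rfl fun u _ => by rw [hdeg u]
  rw [hsum, ← hcardV]
  exact key
end

section
/- Let G be a connected graph on n vertices and let v be a vertex minimizing the usage cost U(w) = Σ_{u ∈ V} dist_G(w,u) over all vertices w. Let T be a breadth-first-search (shortest-path) tree of G rooted at v. Then for every child t of v in T, the subtree of T rooted at t contains at most n/2 vertices. -/
open SimpleGraph

/-- Let `v` minimize the usage cost `U(w) = Σ_u dist(w,u)` in a connected graph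
`G` on `n` vertices, and let `T` be a BFS (shortest-path) spanning tree of `G`
rooted at `v`. Then the subtree of `T` rooted at any child `t` of `v` contains
at most `n/2` vertices. -/
theorem bfs_subtree_at_most_half {V : Type*} [Fintype V] (G : SimpleGraph V)
    (hG : G.Connected) (n : ℕ) (hn : n = Fintype.card V)
    (v : V) (hv : ∀ w : V, ∑ u : V, G.dist v u ≤ ∑ u : V, G.dist w u)
    (T : SimpleGraph V) (hT : T.IsTree) (hTG : T ≤ G)
    (hbfs : ∀ u : V, T.dist v u = G.dist v u)
    (t : V) (ht : T.Adj v t) :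
    (({u : V | (T.deleteEdges {s(v, t)}).Reachable t u}.ncard : ℝ)) ≤ (n : ℝ) / 2 := by
  classical
  set T' := T.deleteEdges {s(v, t)} with hT'def
  set S : Set V := {u : V | T'.Reachable t u} with hSdef
  -- the deleted edge is a bridge of the tree T
  have hbridge : ¬ T'.Reachable v t := by
    have h1 := (isAcyclic_iff_forall_adj_isBridge.mp hT.IsAcyclic) ht
    rw [isBridge_iff] at h1
    exact h1
  -- v is not in S
  have hvS : v ∉ S := fun h => hbridge h.symm
  have hGadj : G.Adj v t := hTG ht
  have hvt1 : G.dist v t = 1 := dist_eq_one_iff_adj.mpr hGadj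
  -- key inequality for u ∈ S
  have keyS : ∀ u ∈ S, G.dist t u + 1 ≤ G.dist v u := by
    intro u hu
    obtain ⟨p, hp⟩ := (hT.isConnected.exists_walk_length_eq_dist v u)
    have htp : t ∈ p.support := by
      by_contra htp
      have hne : ∀ e ∈ p.edges, e ∉ ({s(v, t)} : Set (Sym2 V)) := by
        intro e he hmem
        rw [Set.mem_singleton_iff] at hmem
        subst hmem
        exact htp (p.snd_mem_support_of_mem_edges he)
      have : T'.Reachable v u := ⟨p.toDeleteEdges _ hne⟩
      exact hvS (hu.trans this.symm)
    -- split the walk at t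
    have hsplit := congrArg SimpleGraph.Walk.length (p.take_spec htp)
    rw [SimpleGraph.Walk.length_append] at hsplit
    have h1 : 1 ≤ (p.takeUntil t htp).length := by
      have := T.dist_le (p.takeUntil t htp)
      have hvt : T.dist v t = 1 := dist_eq_one_iff_adj.mpr ht
      omega
    have h2 : G.dist t u ≤ (p.dropUntil t htp).length := by
      calc G.dist t u ≤ ((p.dropUntil t htp).mapLe hTG).length := G.dist_le _
        _ = (p.dropUntil t htp).length := SimpleGraph.Walk.length_map _ _
    have : G.dist v u = p.length := by rw [← hbfs u, hp]
    omega
  -- key inequality for all u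
  have keyAll : ∀ u : V, G.dist t u ≤ G.dist v u + 1 := by
    intro u
    have hvt1' : G.dist t v = 1 := by rw [SimpleGraph.dist_comm]; exact hvt1
    have := hG.dist_triangle (u := t) (v := v) (w := u)
    omega
  -- set up the finset
  set Sf : Finset V := Finset.univ.filter (fun u => u ∈ S) with hSf
  have hcard : S.ncard = Sf.card := by
    rw [Set.ncard_eq_toFinset_card']
    congr 1
    ext u
    simp [hSf]
  -- sum comparison
  have hsum1 : ∑ u ∈ Sf, G.dist t u + Sf.card ≤ ∑ u ∈ Sf, G.dist v u := by
    rw [Finset.card_eq_sum_ones, ← Finset.sum_add_distrib]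
    apply Finset.sum_le_sum
    intro u hu
    exact keyS u (by simpa [hSf] using hu)
  have hsum2 : ∑ u ∈ Sfᶜ, G.dist t u ≤ ∑ u ∈ Sfᶜ, G.dist v u + Sfᶜ.card := by
    have : ∑ u ∈ Sfᶜ, G.dist v u + Sfᶜ.card = ∑ u ∈ Sfᶜ, (G.dist v u + 1) := by
      rw [Finset.sum_add_distrib, Finset.sum_const, smul_eq_mul, mul_one]
    rw [this]
    exact Finset.sum_le_sum fun u _ => keyAll u
  have hsplit_t : ∑ u ∈ Sf, G.dist t u + ∑ u ∈ Sfᶜ, G.dist t u = ∑ u : V, G.dist t u :=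
    Finset.sum_add_sum_compl Sf _
  have hsplit_v : ∑ u ∈ Sf, G.dist v u + ∑ u ∈ Sfᶜ, G.dist v u = ∑ u : V, G.dist v u :=
    Finset.sum_add_sum_compl Sf _
  have hmin := hv t
  have hcards : Sf.card + Sfᶜ.card = n := by
    rw [Finset.card_add_card_compl, hn]
  have hfinal : 2 * Sf.card ≤ n := by omega
  rw [hcard]
  have : (Sf.card : ℝ) * 2 ≤ (n : ℝ) := by
    have := (Nat.cast_le (α := ℝ)).mpr hfinal
    push_cast at this
    linarith
  linarith
end
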